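/- Let c > 0 be a real number and let f : ℕ → ℝ be a nonnegative function such that Σ_{n ≤ x} f(n) = O(x^{c}) as x → ∞. Then, as the integer N → ∞, Σ_{n=0}^{∞} n·f(n)·(1 − 1/N)^{n} = O(N^{c+1}). -/

import Mathlib

open Filter Asymptotics

private lemma aux_summable15 (c : ℝ) :
    Summable (fun k : ℕ => ((k : ℝ) + 1) ^ (c + 1) * Real.exp (-(k : ℝ))) := by
  set m : ℕ := ⌈c⌉₊ + 1 with hm
  have hsum : Summable (fun k : ℕ => ((k : ℝ) + 1) ^ m * Real.exp (-1) ^ k) := by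
    have h1 : Summable (fun k : ℕ => ((k : ℝ)) ^ m * Real.exp (-1) ^ k) :=
      summable_pow_mul_geometric_of_norm_lt_one m (by
        rw [Real.norm_eq_abs, abs_of_pos (Real.exp_pos _)]
        exact Real.exp_lt_one_iff.mpr (by norm_num))
    have h2 := (summable_nat_add_iff 1).mpr h1
    have h3 := h2.mul_left (Real.exp (-1))⁻¹
    refine h3.congr fun k => ?_
    push_cast
    rw [pow_succ]
    field_simp
    ring
  refine Summable.of_nonneg_of_le (fun k => ?_) (fun k => ?_) hsum
  · positivity
  · rw [show Real.exp (-1) ^ k = Real.exp (-(k:ℝ)) by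
      rw [← Real.exp_nat_mul]; ring_nf]
    refine mul_le_mul_of_nonneg_right ?_ (Real.exp_nonneg _)
    have : ((k : ℝ) + 1) ^ (c + 1) ≤ ((k : ℝ) + 1) ^ (m : ℝ) := by
      apply Real.rpow_le_rpow_of_exponent_le (le_add_of_nonneg_left (Nat.cast_nonneg k))
      push_cast [hm]
      have := Nat.le_ceil c
      linarith
    rw [Real.rpow_natCast] at this
    exact this

theorem stmt15 (c : ℝ) (hc : 0 < c) (f : ℕ → ℝ) (hf : ∀ n, 0 ≤ f n)
    (h : (fun x : ℕ => ∑ n ∈ Finset.range (x + 1), f n)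
      =O[atTop] fun x : ℕ => (x : ℝ) ^ c) :
    (fun N : ℕ => ∑' n : ℕ, (n : ℝ) * f n * (1 - 1 / (N : ℝ)) ^ n)
      =O[atTop] fun N : ℕ => (N : ℝ) ^ (c + 1) := by
  set S : ℕ → ℝ := fun x => ∑ n ∈ Finset.range (x + 1), f n with hSdef
  have hSnonneg : ∀ x, 0 ≤ S x := fun x => Finset.sum_nonneg fun n _ => hf n
  have hSmono : Monotone S := fun a b hab =>
    Finset.sum_le_sum_of_subset_of_nonneg
      (Finset.range_subset_range.mpr (by omega)) (fun i _ _ => hf i)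
  -- Global bound S x ≤ D * (x+1)^c
  obtain ⟨C, hC⟩ := h.bound
  rw [eventually_atTop] at hC
  obtain ⟨x₀, hx₀⟩ := hC
  set D : ℝ := max C 0 + S x₀ with hDdef
  have hD0 : 0 ≤ D := add_nonneg (le_max_right _ _) (hSnonneg _)
  have hDb : ∀ x : ℕ, S x ≤ D * ((x : ℝ) + 1) ^ c := by
    intro x
    have hx1 : (0:ℝ) ≤ (x:ℝ) := Nat.cast_nonneg x
    have hpow0 : (0:ℝ) ≤ ((x:ℝ) + 1) ^ c := Real.rpow_nonneg (by linarith) c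
    have hpow1 : (1:ℝ) ≤ ((x:ℝ) + 1) ^ c :=
      Real.one_le_rpow (by linarith) hc.le
    rcases le_or_gt x₀ x with hx | hx
    · have hb := hx₀ x hx
      simp only [Real.norm_eq_abs] at hb
      have h1 : S x ≤ C * (x:ℝ) ^ c := by
        calc S x ≤ |S x| := le_abs_self _
          _ ≤ C * |(x:ℝ) ^ c| := hb
          _ = C * (x:ℝ) ^ c := by rw [abs_of_nonneg (Real.rpow_nonneg hx1 c)]
      have h2 : C * (x:ℝ) ^ c ≤ max C 0 * ((x:ℝ) + 1) ^ c := by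
        calc C * (x:ℝ) ^ c ≤ max C 0 * (x:ℝ) ^ c :=
              mul_le_mul_of_nonneg_right (le_max_left _ _) (Real.rpow_nonneg hx1 c)
          _ ≤ max C 0 * ((x:ℝ) + 1) ^ c :=
              mul_le_mul_of_nonneg_left
                (Real.rpow_le_rpow hx1 (by linarith) hc.le) (le_max_right _ _)
      have h3 : max C 0 * ((x:ℝ) + 1) ^ c ≤ D * ((x:ℝ) + 1) ^ c :=
        mul_le_mul_of_nonneg_right (by simp [hDdef]; exact hSnonneg _) hpow0
      linarith
    · have h1 : S x ≤ S x₀ := hSmono hx.le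
      have h2 : S x₀ ≤ D := by
        have := le_max_right C 0
        simp only [hDdef]; linarith
      calc S x ≤ D := h1.trans h2
        _ = D * 1 := (mul_one _).symm
        _ ≤ D * ((x:ℝ) + 1) ^ c := mul_le_mul_of_nonneg_left hpow1 hD0
  -- the constant T
  set T : ℝ := ∑' k : ℕ, ((k : ℝ) + 1) ^ (c + 1) * Real.exp (-(k : ℝ)) with hTdef
  have hTsum := aux_summable15 c
  have hT0 : 0 ≤ T := tsum_nonneg fun k => by positivity
  rw [isBigO_iff]
  refine ⟨D * T, ?_⟩
  filter_upwards [eventually_ge_atTop 2] with N hN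
  have hNR : (2:ℝ) ≤ (N:ℝ) := by exact_mod_cast hN
  have hNpos : (0:ℝ) < (N:ℝ) := by linarith
  have hNne : (N:ℝ) ≠ 0 := ne_of_gt hNpos
  set r : ℝ := 1 - 1 / (N:ℝ) with hrdef
  have hinv : 1 / (N:ℝ) ≤ 1 := by rw [div_le_one hNpos]; linarith
  have hinv0 : 0 < 1 / (N:ℝ) := by positivity
  have hr0 : 0 ≤ r := by simp only [hrdef]; linarith
  have hr1 : r ≤ 1 := by simp only [hrdef]; linarith
  have hrexp : r ≤ Real.exp (-(1 / (N:ℝ))) := by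
    have := Real.add_one_le_exp (-(1 / (N:ℝ)))
    simp only [hrdef]; linarith
  have hrk : ∀ k : ℕ, r ^ (k * N) ≤ Real.exp (-(k:ℝ)) := by
    intro k
    calc r ^ (k * N) ≤ Real.exp (-(1 / (N:ℝ))) ^ (k * N) :=
          pow_le_pow_left₀ hr0 hrexp _
      _ = Real.exp (((k * N : ℕ) : ℝ) * -(1 / (N:ℝ))) := by
          rw [← Real.exp_nat_mul]
      _ = Real.exp (-(k:ℝ)) := by
          congr 1
          push_cast
          field_simp
  have hterm0 : ∀ n : ℕ, 0 ≤ (n:ℝ) * f n * r ^ n := fun n =>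
    mul_nonneg (mul_nonneg (Nat.cast_nonneg n) (hf n)) (pow_nonneg hr0 n)
  -- block bound
  have hblock : ∀ k : ℕ,
      ∑ n ∈ Finset.Ico (k * N) ((k + 1) * N), (n:ℝ) * f n * r ^ n
        ≤ D * (((k:ℝ) + 1) ^ (c + 1) * Real.exp (-(k:ℝ))) * (N:ℝ) ^ (c + 1) := by
    intro k
    have hb1 : 1 ≤ (k + 1) * N := Nat.mul_pos (Nat.succ_pos k) (by omega)
    have hcast : (((k + 1) * N : ℕ) : ℝ) = ((k:ℝ) + 1) * (N:ℝ) := by push_cast; ring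
    have hBpos : (0:ℝ) < (((k + 1) * N : ℕ) : ℝ) := by
      rw [hcast]; positivity
    have step1 : ∀ n ∈ Finset.Ico (k * N) ((k + 1) * N),
        (n:ℝ) * f n * r ^ n ≤ (((k + 1) * N : ℕ) : ℝ) * Real.exp (-(k:ℝ)) * f n := by
      intro n hn
      rw [Finset.mem_Ico] at hn
      have hn1 : (n:ℝ) ≤ (((k + 1) * N : ℕ) : ℝ) := Nat.cast_le.mpr hn.2.le
      have hn2 : r ^ n ≤ Real.exp (-(k:ℝ)) :=
        (pow_le_pow_of_le_one hr0 hr1 hn.1).trans (hrk k)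
      calc (n:ℝ) * f n * r ^ n
          ≤ ((((k + 1) * N : ℕ) : ℝ) * f n) * Real.exp (-(k:ℝ)) := by
            apply mul_le_mul (mul_le_mul_of_nonneg_right hn1 (hf n)) hn2
              (pow_nonneg hr0 n)
            exact mul_nonneg hBpos.le (hf n)
        _ = (((k + 1) * N : ℕ) : ℝ) * Real.exp (-(k:ℝ)) * f n := by ring
    have step2 : ∑ n ∈ Finset.Ico (k * N) ((k + 1) * N), (n:ℝ) * f n * r ^ n
        ≤ (((k + 1) * N : ℕ) : ℝ) * Real.exp (-(k:ℝ)) * S ((k + 1) * N - 1) := by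
      calc ∑ n ∈ Finset.Ico (k * N) ((k + 1) * N), (n:ℝ) * f n * r ^ n
          ≤ ∑ n ∈ Finset.Ico (k * N) ((k + 1) * N),
              (((k + 1) * N : ℕ) : ℝ) * Real.exp (-(k:ℝ)) * f n :=
            Finset.sum_le_sum step1
        _ = (((k + 1) * N : ℕ) : ℝ) * Real.exp (-(k:ℝ)) *
              ∑ n ∈ Finset.Ico (k * N) ((k + 1) * N), f n := by
            rw [Finset.mul_sum]
        _ ≤ (((k + 1) * N : ℕ) : ℝ) * Real.exp (-(k:ℝ)) * S ((k + 1) * N - 1) := by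
            apply mul_le_mul_of_nonneg_left _ (by positivity)
            have : Finset.Ico (k * N) ((k + 1) * N) ⊆ Finset.range ((k + 1) * N - 1 + 1) := by
              rw [Nat.sub_add_cancel hb1, Finset.range_eq_Ico]
              exact Finset.Ico_subset_Ico (Nat.zero_le _) le_rfl
            exact Finset.sum_le_sum_of_subset_of_nonneg this (fun i _ _ => hf i)
    have hcast2 : (((k + 1) * N - 1 : ℕ) : ℝ) + 1 = (((k + 1) * N : ℕ) : ℝ) := by
      rw [Nat.cast_sub hb1]; push_cast; ring
    have step3 : S ((k + 1) * N - 1) ≤ D * (((k + 1) * N : ℕ) : ℝ) ^ c := by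
      have := hDb ((k + 1) * N - 1)
      rwa [hcast2] at this
    have step4 : ∑ n ∈ Finset.Ico (k * N) ((k + 1) * N), (n:ℝ) * f n * r ^ n
        ≤ (((k + 1) * N : ℕ) : ℝ) * Real.exp (-(k:ℝ)) * (D * (((k + 1) * N : ℕ) : ℝ) ^ c) :=
      step2.trans (mul_le_mul_of_nonneg_left step3 (by positivity))
    refine step4.trans (le_of_eq ?_)
    rw [hcast]
    rw [show (((k:ℝ) + 1) * (N:ℝ)) ^ c = ((k:ℝ) + 1) ^ c * (N:ℝ) ^ c from
      Real.mul_rpow (by positivity) hNpos.le]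
    rw [show ((k:ℝ) + 1) ^ (c + 1) = ((k:ℝ) + 1) ^ c * ((k:ℝ) + 1) from
      Real.rpow_add_one (by positivity) c]
    rw [show ((N:ℝ)) ^ (c + 1) = (N:ℝ) ^ c * (N:ℝ) from
      Real.rpow_add_one hNne c]
    ring
  -- partial sums over q blocks
  have hq : ∀ q : ℕ, ∑ n ∈ Finset.range (q * N), (n:ℝ) * f n * r ^ n
      ≤ D * (∑ k ∈ Finset.range q, ((k:ℝ) + 1) ^ (c + 1) * Real.exp (-(k:ℝ)))
          * (N:ℝ) ^ (c + 1) := by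
    intro q
    induction q with
    | zero => simp
    | succ q ih =>
      have hsplit : ∑ n ∈ Finset.range ((q + 1) * N), (n:ℝ) * f n * r ^ n
          = ∑ n ∈ Finset.range (q * N), (n:ℝ) * f n * r ^ n
            + ∑ n ∈ Finset.Ico (q * N) ((q + 1) * N), (n:ℝ) * f n * r ^ n := by
        rw [Finset.range_eq_Ico, Finset.range_eq_Ico]
        exact (Finset.sum_Ico_consecutive _ (Nat.zero_le _)
          (Nat.mul_le_mul_right N (Nat.le_succ q))).symm
      have hb := hblock q
      have heq : D * (∑ k ∈ Finset.range (q + 1),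
            ((k:ℝ) + 1) ^ (c + 1) * Real.exp (-(k:ℝ))) * (N:ℝ) ^ (c + 1)
          = D * (∑ k ∈ Finset.range q,
            ((k:ℝ) + 1) ^ (c + 1) * Real.exp (-(k:ℝ))) * (N:ℝ) ^ (c + 1)
            + D * (((q:ℝ) + 1) ^ (c + 1) * Real.exp (-(q:ℝ))) * (N:ℝ) ^ (c + 1) := by
        rw [Finset.sum_range_succ]; ring
      rw [hsplit, heq]
      exact add_le_add ih hb
  have hNpow0 : (0:ℝ) ≤ (N:ℝ) ^ (c + 1) := Real.rpow_nonneg hNpos.le _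
  -- all partial sums bounded
  have hM : ∀ M : ℕ, ∑ n ∈ Finset.range M, (n:ℝ) * f n * r ^ n
      ≤ D * T * (N:ℝ) ^ (c + 1) := by
    intro M
    have h1 : ∑ n ∈ Finset.range M, (n:ℝ) * f n * r ^ n
        ≤ ∑ n ∈ Finset.range (M * N), (n:ℝ) * f n * r ^ n := by
      apply Finset.sum_le_sum_of_subset_of_nonneg
      · exact Finset.range_subset_range.mpr (Nat.le_mul_of_pos_right M (by omega))
      · exact fun i _ _ => hterm0 i
    have h2 : (∑ k ∈ Finset.range M, ((k:ℝ) + 1) ^ (c + 1) * Real.exp (-(k:ℝ))) ≤ T :=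
      Summable.sum_le_tsum _ (fun k _ => by positivity) hTsum
    calc ∑ n ∈ Finset.range M, (n:ℝ) * f n * r ^ n
        ≤ ∑ n ∈ Finset.range (M * N), (n:ℝ) * f n * r ^ n := h1
      _ ≤ D * (∑ k ∈ Finset.range M, ((k:ℝ) + 1) ^ (c + 1) * Real.exp (-(k:ℝ)))
            * (N:ℝ) ^ (c + 1) := hq M
      _ ≤ D * T * (N:ℝ) ^ (c + 1) := by
          apply mul_le_mul_of_nonneg_right _ hNpow0
          exact mul_le_mul_of_nonneg_left h2 hD0
  have htsum : ∑' n : ℕ, (n:ℝ) * f n * r ^ n ≤ D * T * (N:ℝ) ^ (c + 1) :=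
    Real.tsum_le_of_sum_range_le hterm0 hM
  have htsum0 : 0 ≤ ∑' n : ℕ, (n:ℝ) * f n * r ^ n := tsum_nonneg hterm0
  simp only [Real.norm_eq_abs]
  rw [abs_of_nonneg htsum0, abs_of_nonneg hNpow0]
  exact htsum
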